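/- Let f : {-1,1}^n → {-1,1} and let 𝒞 = {C₁, …, C_t} be an unambiguous certificate for f, i.e. a partition of {-1,1}^n into subcubes such that f is constant on each C_i, where C_i is the set of points agreeing with a partial assignment τ_i fixing |τ_i| coordinates. Then the Fourier entropy satisfies H(f̂²) ≤ 2·aUC(f,𝒞), where aUC(f,𝒞) = Σ_{i=1}^{t} 2^{−|τ_i|}·|τ_i| is the expected number of coordinates fixed by the certificate containing a uniformly random input. In particular, H(f̂²) ≤ 2·aUC(f), where aUC(f) is the minimum of aUC(f,𝒞) over all unambiguous certificates 𝒞 for f. -/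

import Mathlib

open Finset

/-- The real value (`1` or `-1`) encoded by a Boolean. -/
noncomputable def bsgn (b : Bool) : ℝ := if b then 1 else -1

/-- The character `χ_S(x) = ∏_{i ∈ S} x_i` on the hypercube `{-1,1}^n`. -/
noncomputable def chi {n : ℕ} (S : Finset (Fin n)) (x : Fin n → Bool) : ℝ :=
  ∏ i ∈ S, bsgn (x i)

/-- The Fourier coefficient `f̂(S) = E_x [f(x)·χ_S(x)]`. -/
noncomputable def fCoeff {n : ℕ} (f : (Fin n → Bool) → ℝ) (S : Finset (Fin n)) : ℝ :=
  (∑ x : Fin n → Bool, f x * chi S x) / 2 ^ n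

/-- The Fourier (Shannon) entropy `H(f̂²) = Σ_S f̂(S)² log₂(1/f̂(S)²)`. -/
noncomputable def fEntropy {n : ℕ} (f : (Fin n → Bool) → ℝ) : ℝ :=
  ∑ S : Finset (Fin n), (fCoeff f S) ^ 2 * Real.logb 2 (1 / (fCoeff f S) ^ 2)

/-- The Fourier min-entropy `H_∞(f̂²) = min_{S : f̂(S) ≠ 0} log₂(1/f̂(S)²)`. -/
noncomputable def fMinEntropy {n : ℕ} (f : (Fin n → Bool) → ℝ) : ℝ :=
  sInf {y : ℝ | ∃ S : Finset (Fin n),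
    fCoeff f S ≠ 0 ∧ y = Real.logb 2 (1 / (fCoeff f S) ^ 2)}

/-- The total influence `Inf(f) = Σ_S |S|·f̂(S)²`. -/
noncomputable def totalInf {n : ℕ} (f : (Fin n → Bool) → ℝ) : ℝ :=
  ∑ S : Finset (Fin n), (S.card : ℝ) * (fCoeff f S) ^ 2

/-- `f` is a Boolean (`±1`-valued) function. -/
def IsBooleanFunc {n : ℕ} (f : (Fin n → Bool) → ℝ) : Prop := ∀ x, f x = 1 ∨ f x = -1

namespace Stmt6Aux

lemma bsgn_mul_self (b : Bool) : bsgn b * bsgn b = 1 := by cases b <;> simp [bsgn]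

lemma bsgn_not (b : Bool) : bsgn (!b) = - bsgn b := by cases b <;> simp [bsgn]

variable {n : ℕ}

lemma chi_mul_self (S : Finset (Fin n)) (x : Fin n → Bool) : chi S x * chi S x = 1 := by
  rw [chi, ← Finset.prod_mul_distrib]
  exact Finset.prod_eq_one fun i _ => bsgn_mul_self _

lemma chi_update_not_mem {S : Finset (Fin n)} {j : Fin n} (hj : j ∉ S) (x : Fin n → Bool)
    (v : Bool) : chi S (Function.update x j v) = chi S x := by
  refine Finset.prod_congr rfl fun i hi => ?_
  rw [Function.update_of_ne (by rintro rfl; exact hj hi)]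

lemma chi_update_mem {S : Finset (Fin n)} {j : Fin n} (hj : j ∈ S) (x : Fin n → Bool) :
    chi S (Function.update x j (!x j)) = - chi S x := by
  have : (fun i => bsgn (Function.update x j (!x j) i)) = fun i =>
      Function.update (fun i => bsgn (x i)) j (bsgn (!x j)) i := by
    funext i
    by_cases h : i = j
    · subst h; simp
    · simp [Function.update_of_ne h]
  rw [chi]
  simp only [this]
  rw [Finset.prod_update_of_mem hj, bsgn_not, neg_mul, chi,
    ← Finset.prod_erase_mul S _ hj, Finset.erase_eq, mul_comm]

/-- Sum of a sign-flipping function over a flip-closed set is zero. -/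
lemma sum_flip_zero {s : Finset (Fin n → Bool)} {F : (Fin n → Bool) → ℝ} {j : Fin n}
    (hmem : ∀ x ∈ s, Function.update x j (!x j) ∈ s)
    (hflip : ∀ x, F (Function.update x j (!x j)) = - F x) :
    ∑ x ∈ s, F x = 0 := by
  refine Finset.sum_involution (fun x _ => Function.update x j (!x j)) ?_ ?_ hmem ?_
  · intro x _; rw [hflip]; ring
  · intro x _ hF h
    have := congrFun h j
    simp at this
  · intro x _
    funext i
    by_cases h : i = j
    · subst h; simp
    · simp [Function.update_of_ne h]

lemma card_univ_bool : (Finset.univ : Finset (Fin n → Bool)).card = 2 ^ n := by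
  rw [Finset.card_univ, Fintype.card_fun]
  simp

lemma sum_chi_mul_chi (S T : Finset (Fin n)) :
    ∑ x : Fin n → Bool, chi S x * chi T x = if S = T then (2:ℝ) ^ n else 0 := by
  by_cases h : S = T
  · subst h
    simp only [chi_mul_self, if_true, Finset.sum_const, card_univ_bool, nsmul_eq_mul, mul_one]
    push_cast; ring
  · rw [if_neg h]
    -- find j in exactly one of S, T
    have hex : ∃ j, (j ∈ S ∧ j ∉ T) ∨ (j ∈ T ∧ j ∉ S) := by
      by_contra hc
      push_neg at hc
      apply h
      ext j
      exact ⟨(hc j).1, (hc j).2⟩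
    obtain ⟨j, hj⟩ := hex
    refine sum_flip_zero (j := j) (fun x _ => Finset.mem_univ _) fun x => ?_
    rcases hj with ⟨hjS, hjT⟩ | ⟨hjT, hjS⟩
    · rw [chi_update_mem hjS, chi_update_not_mem hjT]; ring
    · rw [chi_update_mem hjT, chi_update_not_mem hjS]; ring

lemma sum_chi_chi (x y : Fin n → Bool) :
    ∑ S : Finset (Fin n), chi S x * chi S y = if x = y then (2:ℝ) ^ n else 0 := by
  have key : ∀ S : Finset (Fin n), chi S x * chi S y = ∏ j ∈ S, (bsgn (x j) * bsgn (y j)) := by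
    intro S; rw [chi, chi, Finset.prod_mul_distrib]
  simp only [key]
  have := Finset.prod_add (fun j : Fin n => bsgn (x j) * bsgn (y j)) (fun _ => (1:ℝ)) Finset.univ
  simp only [Finset.prod_const_one, mul_one, Finset.powerset_univ] at this
  rw [← this]
  by_cases h : x = y
  · subst h
    rw [if_pos rfl]
    rw [Finset.prod_congr rfl fun j _ => by rw [bsgn_mul_self]]
    simp
    norm_num
  · rw [if_neg h]
    have : ∃ j, x j ≠ y j := by
      by_contra hc; push_neg at hc; exact h (funext hc)
    obtain ⟨j, hj⟩ := this
    apply Finset.prod_eq_zero (Finset.mem_univ j)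
    cases hx : x j <;> cases hy : y j <;> simp_all [bsgn]

lemma parseval (g : (Fin n → Bool) → ℝ) :
    ∑ S : Finset (Fin n), fCoeff g S ^ 2 = (∑ x : Fin n → Bool, g x ^ 2) / 2 ^ n := by
  have h2n : ((2:ℝ) ^ n) ≠ 0 := by positivity
  simp only [fCoeff, div_pow, div_mul_div_comm, ← Finset.sum_div, sq]
  rw [div_eq_div_iff (by positivity) h2n]
  have expand : ∀ S : Finset (Fin n),
      (∑ x : Fin n → Bool, g x * chi S x) * ∑ x : Fin n → Bool, g x * chi S x
      = ∑ x : Fin n → Bool, ∑ y : Fin n → Bool, g x * g y * (chi S x * chi S y) := by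
    intro S
    rw [Finset.sum_mul_sum]
    exact Finset.sum_congr rfl fun x _ => Finset.sum_congr rfl fun y _ => by ring
  simp only [expand]
  rw [Finset.sum_comm]
  have swap : ∀ x : Fin n → Bool,
      (∑ S : Finset (Fin n), ∑ y : Fin n → Bool, g x * g y * (chi S x * chi S y))
      = ∑ y : Fin n → Bool, g x * g y * ∑ S : Finset (Fin n), chi S x * chi S y := by
    intro x
    rw [Finset.sum_comm]
    exact Finset.sum_congr rfl fun y _ => by rw [Finset.mul_sum]
  simp only [swap, sum_chi_chi]
  have : ∀ x : Fin n → Bool,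
      (∑ y : Fin n → Bool, g x * g y * if x = y then (2:ℝ)^n else 0) = g x ^ 2 * 2 ^ n := by
    intro x
    rw [Finset.sum_eq_single x]
    · simp [sq]
    · intro y _ hy; rw [if_neg (Ne.symm hy), mul_zero]
    · intro hx; exact (hx (Finset.mem_univ x)).elim
  simp only [this]
  rw [← Finset.sum_mul]
  have hsq : ∀ x : Fin n → Bool, g x ^ 2 = g x * g x := fun x => sq (g x)
  simp only [hsq]
  ring

/-- Bessel's inequality for the characters. -/
lemma bessel (g : (Fin n → Bool) → ℝ) (A : Finset (Finset (Fin n))) :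
    ∑ S ∈ A, fCoeff g S ^ 2 ≤ (∑ x : Fin n → Bool, g x ^ 2) / 2 ^ n := by
  rw [← parseval g]
  apply Finset.sum_le_sum_of_subset_of_nonneg (Finset.subset_univ A)
  intro S _ _
  positivity

end Stmt6Aux


lemma card_cube_aux {n : ℕ} (D : Finset (Fin n)) (v : Fin n → Bool) :
    (univ.filter (fun x : Fin n → Bool => ∀ j ∈ D, x j = v j)).card = 2 ^ (n - D.card) := by
  classical
  rw [← Fintype.card_subtype]
  have e : {x : Fin n → Bool // ∀ j ∈ D, x j = v j} ≃ ({j : Fin n // j ∉ D} → Bool) :=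
    { toFun := fun x j => x.1 j.1
      invFun := fun y => ⟨fun j => if h : j ∈ D then v j else y ⟨j, h⟩,
        fun j hj => by simp [hj]⟩
      left_inv := fun x => by
        apply Subtype.ext
        funext j
        by_cases h : j ∈ D
        · simp [h, (x.2 j h).symm]
        · simp [h]
      right_inv := fun y => by
        funext j
        simp [j.2] }
  rw [Fintype.card_congr e, Fintype.card_fun, Fintype.card_bool]
  congr 1
  rw [Fintype.card_subtype]
  have : univ.filter (fun j : Fin n => j ∉ D) = Dᶜ := by
    ext j; simp
  rw [this, Finset.card_compl, Fintype.card_fin]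

lemma two_pow_mul_sq (m : ℕ) :
    ((2:ℝ) ^ m) * ((2:ℝ) ^ (-(m:ℤ))) ^ 2 = (2:ℝ) ^ (-(m:ℤ)) := by
  rw [← zpow_natCast (2:ℝ) m, sq, ← zpow_add₀ (by norm_num : (2:ℝ) ≠ 0),
    ← zpow_add₀ (by norm_num : (2:ℝ) ≠ 0)]
  congr 1
  ring

lemma pow_sub_div {n m : ℕ} (h : m ≤ n) : (2:ℝ) ^ (n - m) / 2 ^ n = 2 ^ (-(m:ℤ)) := by
  rw [zpow_neg, zpow_natCast, div_eq_iff (by positivity), inv_mul_eq_div,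
    eq_div_iff (by positivity), ← pow_add]
  congr 1
  omega



/-- Let `𝒞` be an unambiguous certificate for `f`: a family of subcubes
(cube `i` consisting of the points agreeing with the partial assignment fixing the
coordinates in `dom i` to the values `val i`) that partitions `{-1,1}^n` (every point lies
in exactly one cube) and on each of which `f` is constant.  Then
`H(f̂²) ≤ 2 · aUC(f,𝒞)` where `aUC(f,𝒞) = Σ_i 2^{-|dom i|}·|dom i|` is the expected number
of coordinates fixed by the certificate containing a uniformly random input.
(In particular, minimizing over `𝒞`, `H(f̂²) ≤ 2·aUC(f)`.) -/
theorem stmt6 {n t : ℕ} (f : (Fin n → Bool) → ℝ) (hf : IsBooleanFunc f)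
    (dom : Fin t → Finset (Fin n)) (val : Fin t → Fin n → Bool)
    (hpart : ∀ x : Fin n → Bool, ∃! i : Fin t, ∀ j ∈ dom i, x j = val i j)
    (hmono : ∀ i : Fin t, ∀ x y : Fin n → Bool,
      (∀ j ∈ dom i, x j = val i j) → (∀ j ∈ dom i, y j = val i j) → f x = f y) :
    fEntropy f ≤ 2 * ∑ i : Fin t, (2 : ℝ) ^ (-((dom i).card : ℤ)) * ((dom i).card : ℝ) := by
  classical
  set d : Fin t → ℕ := fun i => (dom i).card with hd
  have hdn : ∀ i, d i ≤ n := fun i => le_trans (Finset.card_le_univ _) (by simp)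
  -- the classifier
  set c : (Fin n → Bool) → Fin t := fun x => (hpart x).choose with hc
  have hcx : ∀ x, ∀ j ∈ dom (c x), x j = val (c x) j := fun x => (hpart x).choose_spec.1
  have hcu : ∀ x i, (∀ j ∈ dom i, x j = val i j) → c x = i :=
    fun x i h => ((hpart x).choose_spec.2 i h).symm
  set cube : Fin t → Finset (Fin n → Bool) :=
    fun i => univ.filter (fun x => c x = i) with hcube
  have mem_cube : ∀ {x i}, x ∈ cube i ↔ c x = i := by
    intro x i; simp [hcube]
  have cube_eq : ∀ i, cube i = univ.filter (fun x => ∀ j ∈ dom i, x j = val i j) := by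
    intro i
    ext x
    simp only [hcube, Finset.mem_filter, Finset.mem_univ, true_and]
    constructor
    · rintro rfl; exact hcx x
    · exact hcu x i
  have card_cube : ∀ i, (cube i).card = 2 ^ (n - d i) := by
    intro i; rw [cube_eq i]; exact card_cube_aux (dom i) (val i)
  set b : Fin t → ℝ := fun i => f (val i) with hb
  have hfb : ∀ x, f x = b (c x) := fun x => hmono (c x) x (val (c x)) (hcx x) (fun j _ => rfl)
  have hb_sq : ∀ i, b i ^ 2 = 1 := by
    intro i
    rcases hf (val i) with h | h <;> simp [hb, h]
  have hf_sq : ∀ x, f x ^ 2 = 1 := by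
    intro x
    rcases hf x with h | h <;> simp [h]
  -- sum of chi over a cube
  have sum_cube : ∀ (i : Fin t) (S : Finset (Fin n)), (∑ x ∈ cube i, chi S x) =
      if S ⊆ dom i then (2:ℝ) ^ (n - d i) * chi S (val i) else 0 := by
    intro i S
    by_cases hS : S ⊆ dom i
    · rw [if_pos hS]
      have hcongr : ∀ x ∈ cube i, chi S x = chi S (val i) := by
        intro x hx
        refine Finset.prod_congr rfl fun j hj => ?_
        have hxagree : ∀ j ∈ dom i, x j = val i j := by
          have := mem_cube.mp hx
          rw [← this]; exact hcx x
        rw [hxagree j (hS hj)]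
      rw [Finset.sum_congr rfl hcongr, Finset.sum_const, card_cube i, nsmul_eq_mul]
      push_cast
      ring
    · rw [if_neg hS]
      obtain ⟨j, hjS, hjD⟩ : ∃ j, j ∈ S ∧ j ∉ dom i := by
        rcases Finset.not_subset.mp hS with ⟨j, hj1, hj2⟩
        exact ⟨j, hj1, hj2⟩
      refine Stmt6Aux.sum_flip_zero (j := j) ?_ (fun x => Stmt6Aux.chi_update_mem hjS x)
      intro x hx
      rw [cube_eq] at hx ⊢
      simp only [Finset.mem_filter, Finset.mem_univ, true_and] at hx ⊢
      intro j' hj'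
      rw [Function.update_of_ne (by rintro rfl; exact hjD hj'), hx j' hj']
  -- generalized coefficient formula
  have coeffP : ∀ (P : Fin t → Prop) (_ : DecidablePred P) (S : Finset (Fin n)),
      fCoeff (fun x => if P (c x) then f x else 0) S
        = ∑ i ∈ univ.filter (fun i => S ⊆ dom i ∧ P i),
            b i * chi S (val i) * (2:ℝ) ^ (-(d i : ℤ)) := by
    intro P hP S
    rw [fCoeff]
    have hsplit : (∑ x : Fin n → Bool, (if P (c x) then f x else 0) * chi S x)
        = ∑ i : Fin t, ∑ x ∈ cube i, (if P (c x) then f x else 0) * chi S x := by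
      rw [← Finset.sum_fiberwise_of_maps_to (g := c) (fun x _ => Finset.mem_univ (c x))]
    rw [hsplit]
    have hinner : ∀ i : Fin t, (∑ x ∈ cube i, (if P (c x) then f x else 0) * chi S x)
        = (if P i then b i else 0) * ∑ x ∈ cube i, chi S x := by
      intro i
      rw [Finset.mul_sum]
      refine Finset.sum_congr rfl fun x hx => ?_
      have hcxi := mem_cube.mp hx
      rw [hfb x, hcxi]
    simp only [hinner, sum_cube]
    rw [Finset.sum_div]
    rw [Finset.sum_filter]
    refine Finset.sum_congr rfl fun i _ => ?_
    by_cases h1 : S ⊆ dom i <;> by_cases h2 : P i <;>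
      simp only [h1, h2, if_true, if_false, true_and, false_and, and_true, and_false,
        mul_zero, zero_mul, zero_div]
    rw [← pow_sub_div (hdn i)]
    ring
  set I : Finset (Fin n) → Finset (Fin t) :=
    fun S => univ.filter (fun i => S ⊆ dom i) with hI
  have coeff_formula : ∀ S, fCoeff f S
      = ∑ i ∈ I S, b i * chi S (val i) * (2:ℝ) ^ (-(d i : ℤ)) := by
    intro S
    have := coeffP (fun _ => True) (by infer_instance) S
    simp only [if_true, and_true] at this
    rw [← this]
  -- I S empty gives zero coefficient
  have coeff_zero : ∀ S, fCoeff f S ≠ 0 → (I S).Nonempty := by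
    intro S h
    by_contra hne
    rw [Finset.not_nonempty_iff_eq_empty] at hne
    rw [coeff_formula S, hne, Finset.sum_empty] at h
    exact h rfl
  set p : Finset (Fin n) → ℝ := fun S => fCoeff f S ^ 2 with hp
  set q : Finset (Fin n) → ℝ := fun S => ∑ i ∈ I S, ((2:ℝ) ^ (-(d i : ℤ))) ^ 2 with hq
  have hp_nonneg : ∀ S, 0 ≤ p S := fun S => sq_nonneg _
  have hq_nonneg : ∀ S, 0 ≤ q S :=
    fun S => Finset.sum_nonneg fun i _ => sq_nonneg _
  -- sum over i of 2^(-d i) = 1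
  have sum_cards : ∑ i : Fin t, ((cube i).card : ℝ) = 2 ^ n := by
    have := Finset.card_eq_sum_card_fiberwise
      (f := c) (s := (univ : Finset (Fin n → Bool))) (t := univ)
      (fun x _ => Finset.mem_univ (c x))
    rw [Stmt6Aux.card_univ_bool] at this
    have := congrArg (fun k : ℕ => (k : ℝ)) this
    push_cast at this
    rw [this]
  have sum_pd : ∑ i : Fin t, (2:ℝ) ^ (-(d i : ℤ)) = 1 := by
    have : ∀ i : Fin t, ((cube i).card : ℝ) / 2 ^ n = (2:ℝ) ^ (-(d i : ℤ)) := by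
      intro i
      rw [card_cube i]
      push_cast
      exact pow_sub_div (hdn i)
    rw [← Finset.sum_congr rfl fun i _ => this i, ← Finset.sum_div, sum_cards,
      div_self (by positivity)]
  -- sum of q = 1
  have powerset_eq : ∀ i : Fin t, univ.filter (fun S : Finset (Fin n) => S ⊆ dom i)
      = (dom i).powerset := by
    intro i; ext S; simp [Finset.mem_powerset]
  have sum_q : ∑ S : Finset (Fin n), q S = 1 := by
    have swap : ∑ S : Finset (Fin n), q S
        = ∑ i : Fin t, ∑ S ∈ univ.filter (fun S : Finset (Fin n) => S ⊆ dom i),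
            ((2:ℝ) ^ (-(d i : ℤ))) ^ 2 := by
      simp only [hq, hI, Finset.sum_filter]
      rw [Finset.sum_comm]
    rw [swap]
    have : ∀ i : Fin t, (∑ S ∈ univ.filter (fun S : Finset (Fin n) => S ⊆ dom i),
        ((2:ℝ) ^ (-(d i : ℤ))) ^ 2) = (2:ℝ) ^ (-(d i : ℤ)) := by
      intro i
      rw [powerset_eq i, Finset.sum_const, Finset.card_powerset, nsmul_eq_mul]
      push_cast
      exact two_pow_mul_sq (d i)
    rw [Finset.sum_congr rfl fun i _ => this i, sum_pd]
  -- sum of p = 1 (Parseval)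
  have sum_p : ∑ S : Finset (Fin n), p S = 1 := by
    simp only [hp]
    rw [Stmt6Aux.parseval f]
    rw [Finset.sum_congr rfl fun x _ => hf_sq x, Finset.sum_const, Stmt6Aux.card_univ_bool,
      nsmul_eq_mul, mul_one]
    push_cast
    rw [div_self (by positivity)]
  -- Gibbs inequality
  have hlog2 : (0:ℝ) < Real.log 2 := Real.log_pos (by norm_num)
  have gibbs : fEntropy f ≤ ∑ S : Finset (Fin n), p S * Real.logb 2 (1 / q S) := by
    have key : ∀ S : Finset (Fin n),
        p S * Real.logb 2 (1 / p S) - p S * Real.logb 2 (1 / q S)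
          ≤ (q S - p S) / Real.log 2 := by
      intro S
      rcases eq_or_lt_of_le (hp_nonneg S) with h0 | h0
      · rw [← h0]
        simp only [zero_mul, sub_zero, sub_self]
        exact div_nonneg (hq_nonneg S) hlog2.le
      · have hqS : 0 < q S := by
          have hne : (I S).Nonempty := coeff_zero S (by
            intro h; rw [hp] at h0; simp [h] at h0)
          obtain ⟨i, hi⟩ := hne
          exact lt_of_lt_of_le (by positivity)
            (Finset.single_le_sum (fun i _ => sq_nonneg ((2:ℝ) ^ (-(d i : ℤ)))) hi)
        rw [one_div, one_div, Real.logb_inv, Real.logb_inv]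
        rw [show p S * -Real.logb 2 (p S) - p S * -Real.logb 2 (q S)
          = p S * (Real.logb 2 (q S) - Real.logb 2 (p S)) by ring]
        rw [← Real.logb_div (ne_of_gt hqS) (ne_of_gt h0)]
        have hlog := Real.log_le_sub_one_of_pos (show 0 < q S / p S from div_pos hqS h0)
        have h1 : p S * Real.log (q S / p S) ≤ q S - p S := by
          calc p S * Real.log (q S / p S) ≤ p S * (q S / p S - 1) :=
                mul_le_mul_of_nonneg_left hlog (le_of_lt h0)
            _ = q S - p S := by field_simp
        rw [Real.logb, ← mul_div_assoc]
        exact div_le_div_of_nonneg_right h1 (le_of_lt hlog2)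
    have hsum := Finset.sum_le_sum (s := (univ : Finset (Finset (Fin n)))) fun S _ => key S
    rw [Finset.sum_sub_distrib] at hsum
    have : ∑ S : Finset (Fin n), (q S - p S) / Real.log 2
        = ((∑ S : Finset (Fin n), q S) - ∑ S : Finset (Fin n), p S) / Real.log 2 := by
      rw [← Finset.sum_div, Finset.sum_sub_distrib]
    rw [this, sum_q, sum_p, sub_self, zero_div] at hsum
    have hent : fEntropy f = ∑ S : Finset (Fin n), p S * Real.logb 2 (1 / p S) := rfl
    rw [hent]
    linarith
  
  -- step 2: pointwise bound via minimal codimension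
  set E : Finset (Fin n) → ℕ :=
    fun S => ((range n).filter (fun k => ∀ i : Fin t, S ⊆ dom i → k < d i)).card with hE
  have step2 : ∀ S, p S * Real.logb 2 (1 / q S) ≤ p S * (2 * (E S : ℝ)) := by
    intro S
    rcases eq_or_lt_of_le (hp_nonneg S) with h0 | h0
    · rw [← h0]; simp
    · have hne : (I S).Nonempty := coeff_zero S (by
        intro h; rw [hp] at h0; simp [h] at h0)
      obtain ⟨i0, hi0mem, hi0min⟩ := Finset.exists_min_image (I S) d hne
      have hi0dom : S ⊆ dom i0 := by
        have := hi0mem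
        rw [hI, Finset.mem_filter] at this
        exact this.2
      have hES : E S = d i0 := by
        have heq : (range n).filter (fun k => ∀ i : Fin t, S ⊆ dom i → k < d i)
            = range (d i0) := by
          ext k
          simp only [Finset.mem_filter, Finset.mem_range]
          constructor
          · rintro ⟨-, hk⟩; exact hk i0 hi0dom
          · intro hk
            refine ⟨lt_of_lt_of_le hk (hdn i0), fun i hi => lt_of_lt_of_le hk (hi0min i ?_)⟩
            rw [hI, Finset.mem_filter]
            exact ⟨Finset.mem_univ i, hi⟩
        simp only [hE]
        rw [heq, Finset.card_range]
      have hqS_ge : ((2:ℝ) ^ (-(d i0 : ℤ))) ^ 2 ≤ q S :=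
        Finset.single_le_sum (fun i _ => sq_nonneg ((2:ℝ) ^ (-(d i : ℤ)))) hi0mem
      have hqS : 0 < q S := lt_of_lt_of_le (by positivity) hqS_ge
      have h3 : (1:ℝ) / ((2:ℝ) ^ (-(d i0 : ℤ))) ^ 2 = (2:ℝ) ^ (2 * d i0) := by
        rw [← zpow_natCast (2:ℝ) (2 * d i0), sq,
          ← zpow_add₀ (by norm_num : (2:ℝ) ≠ 0), one_div,
          ← zpow_neg]
        congr 1
        push_cast
        ring
      have hlogb : Real.logb 2 (1 / q S) ≤ 2 * (E S : ℝ) := by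
        have h2 : Real.logb 2 (1 / q S)
            ≤ Real.logb 2 (1 / ((2:ℝ) ^ (-(d i0 : ℤ))) ^ 2) := by
          refine (Real.logb_le_logb (by norm_num) (one_div_pos.mpr hqS) (by positivity)).mpr ?_
          exact one_div_le_one_div_of_le (by positivity) hqS_ge
        rw [h3] at h2
        refine le_trans h2 ?_
        rw [Real.logb_pow, Real.logb_self_eq_one (by norm_num), hES]
        push_cast
        ring_nf
        exact le_refl _
      exact mul_le_mul_of_nonneg_left hlogb (hp_nonneg S)
  -- step 3: rewrite the E-sum as a double sum
  have hEcast : ∀ S : Finset (Fin n), (E S : ℝ)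
      = ∑ k ∈ range n, if (∀ i : Fin t, S ⊆ dom i → k < d i) then (1:ℝ) else 0 := by
    intro S
    simp only [hE]
    rw [Finset.card_filter]
    push_cast
    rfl
  have step3 : (∑ S : Finset (Fin n), p S * (2 * (E S : ℝ)))
      = 2 * ∑ k ∈ range n, ∑ S ∈ univ.filter
          (fun S : Finset (Fin n) => ∀ i : Fin t, S ⊆ dom i → k < d i), p S := by
    have hterm : ∀ S : Finset (Fin n), p S * (2 * (E S : ℝ))
        = 2 * ∑ k ∈ range n,
            (if (∀ i : Fin t, S ⊆ dom i → k < d i) then p S else 0) := by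
      intro S
      rw [hEcast S, Finset.mul_sum]
      rw [Finset.mul_sum]
      rw [Finset.mul_sum]
      refine Eq.trans ?_ rfl
      rw [← Finset.sum_congr rfl fun k _ => rfl]
      ring_nf
      refine Finset.sum_congr rfl fun k _ => ?_
      by_cases hk : (∀ i : Fin t, S ⊆ dom i → k < d i) <;> simp [hk] <;> ring
    rw [Finset.sum_congr rfl fun S _ => hterm S, ← Finset.mul_sum]
    congr 1
    rw [Finset.sum_comm]
    refine Finset.sum_congr rfl fun k _ => ?_
    rw [Finset.sum_filter]
  -- step 4: Bessel bound for each level k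
  have step4 : ∀ k, (∑ S ∈ univ.filter
        (fun S : Finset (Fin n) => ∀ i : Fin t, S ⊆ dom i → k < d i), p S)
      ≤ ∑ i ∈ univ.filter (fun i : Fin t => k < d i), (2:ℝ) ^ (-(d i : ℤ)) := by
    intro k
    set g : (Fin n → Bool) → ℝ := fun x => if k < d (c x) then f x else 0 with hg
    have hcoe : ∀ S ∈ univ.filter
        (fun S : Finset (Fin n) => ∀ i : Fin t, S ⊆ dom i → k < d i),
        p S = fCoeff g S ^ 2 := by
      intro S hS
      simp only [Finset.mem_filter, Finset.mem_univ, true_and] at hS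
      have h2 := coeffP (fun i => k < d i) (fun i => inferInstance) S
      have hcf : fCoeff f S = fCoeff g S := by
        rw [hg]
        refine (coeff_formula S).trans (Eq.trans ?_ h2.symm)
        refine Finset.sum_congr ?_ (fun _ _ => rfl)
        ext i
        rw [hI]
        simp only [Finset.mem_filter, Finset.mem_univ, true_and]
        exact ⟨fun h => ⟨h, hS i h⟩, fun h => h.1⟩
      simp only [hp]
      rw [hcf]
    rw [Finset.sum_congr rfl hcoe]
    refine le_trans (Stmt6Aux.bessel g _) ?_
    have hg2 : (∑ x : Fin n → Bool, g x ^ 2)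
        = ∑ i ∈ univ.filter (fun i : Fin t => k < d i), (2:ℝ) ^ (n - d i) := by
      rw [← Finset.sum_fiberwise_of_maps_to (g := c) (fun x _ => Finset.mem_univ (c x))]
      rw [Finset.sum_filter]
      refine Finset.sum_congr rfl fun i _ => ?_
      have hcube2 : ∀ x ∈ cube i, g x ^ 2 = if k < d i then (1:ℝ) else 0 := by
        intro x hx
        have hcxi := mem_cube.mp hx
        rw [hg]
        simp only [hcxi]
        by_cases hk : k < d i
        · simp [hk, hf_sq x]
        · simp [hk]
      rw [Finset.sum_congr rfl hcube2, Finset.sum_const, nsmul_eq_mul, card_cube i]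
      by_cases hk : k < d i
      · simp only [hk, if_true, mul_one]
        push_cast
        rfl
      · simp [hk]
    rw [hg2, Finset.sum_div]
    refine le_of_eq (Finset.sum_congr rfl fun i _ => ?_)
    exact pow_sub_div (hdn i)
  -- step 5: exchange the double sum
  have step5 : (∑ k ∈ range n, ∑ i ∈ univ.filter (fun i : Fin t => k < d i),
        (2:ℝ) ^ (-(d i : ℤ)))
      = ∑ i : Fin t, (2:ℝ) ^ (-(d i : ℤ)) * (d i : ℝ) := by
    have h1 : ∀ k, (∑ i ∈ univ.filter (fun i : Fin t => k < d i), (2:ℝ) ^ (-(d i : ℤ)))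
        = ∑ i : Fin t, if k < d i then (2:ℝ) ^ (-(d i : ℤ)) else 0 := by
      intro k
      rw [Finset.sum_filter]
    rw [Finset.sum_congr rfl fun k _ => h1 k, Finset.sum_comm]
    refine Finset.sum_congr rfl fun i _ => ?_
    rw [← Finset.sum_filter]
    have heq : (range n).filter (fun k => k < d i) = range (d i) := by
      ext k
      simp only [Finset.mem_filter, Finset.mem_range]
      constructor
      · rintro ⟨-, h⟩; exact h
      · intro h; exact ⟨lt_of_lt_of_le h (hdn i), h⟩
    rw [heq, Finset.sum_const, Finset.card_range, nsmul_eq_mul, mul_comm]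
  -- combine everything
  calc fEntropy f ≤ ∑ S : Finset (Fin n), p S * Real.logb 2 (1 / q S) := gibbs
    _ ≤ ∑ S : Finset (Fin n), p S * (2 * (E S : ℝ)) :=
        Finset.sum_le_sum fun S _ => step2 S
    _ = 2 * ∑ k ∈ range n, ∑ S ∈ univ.filter
          (fun S : Finset (Fin n) => ∀ i : Fin t, S ⊆ dom i → k < d i), p S := step3
    _ ≤ 2 * ∑ k ∈ range n, ∑ i ∈ univ.filter (fun i : Fin t => k < d i),
          (2:ℝ) ^ (-(d i : ℤ)) := by
        refine mul_le_mul_of_nonneg_left ?_ (by norm_num)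
        exact Finset.sum_le_sum fun k _ => step4 k
    _ = 2 * ∑ i : Fin t, (2:ℝ) ^ (-(d i : ℤ)) * (d i : ℝ) := by rw [step5]
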